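/- Let n > 2 and let U be a neighborhood of the unit simplex Δⁿ in ℝⁿ. There is no C¹ function h: U → ℝ such that D_j(x_j/x_i + h(x)) = D_i(x_i/x_j + h(x)), D_j(x_ℓ/x_k + h(x)) = D_k(x_i/x_j + h(x)), and D_i(x_ℓ/x_k + h(x)) = D_k(x_j/x_i + h(x)) hold for all x ∈ U, where i, j, k, ℓ are such that i ≠ j, p(i)=j, p(j)=i, k ∉ {i,j}, ℓ ∉ {i,j}. -/

import Mathlib

lemma quot_fderiv_single {n : ℕ} (a b c : Fin n) (x : Fin n → ℝ) (hb : x b ≠ 0)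
    (h : (Fin n → ℝ) → ℝ) (hh : DifferentiableAt ℝ h x) :
    fderiv ℝ (fun y : Fin n → ℝ => y a / y b + h y) x (Pi.single c 1)
      = (1 / x b) * (if a = c then 1 else 0) - (x a / x b ^ 2) * (if b = c then 1 else 0)
        + fderiv ℝ h x (Pi.single c 1) := by
  have hpa := hasFDerivAt_apply (𝕜 := ℝ) a x
  have hpb := hasFDerivAt_apply (𝕜 := ℝ) b x
  have hinv : HasFDerivAt (fun y : Fin n → ℝ => (y b)⁻¹)
      ((-(ContinuousLinearMap.mulLeftRight ℝ ℝ (x b)⁻¹ (x b)⁻¹)).comp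
        (ContinuousLinearMap.proj b)) x :=
    (hasFDerivAt_inv' hb).comp x hpb
  have hmul : HasFDerivAt (fun y : Fin n → ℝ => y a * (y b)⁻¹ + h y) _ x :=
    (hpa.mul hinv).add hh.hasFDerivAt
  have hfun : (fun y : Fin n → ℝ => y a / y b + h y) = fun y => y a * (y b)⁻¹ + h y := by
    funext y; rw [div_eq_mul_inv]
  rw [hfun, hmul.fderiv]
  simp only [ContinuousLinearMap.add_apply, ContinuousLinearMap.smul_apply,
    ContinuousLinearMap.comp_apply, ContinuousLinearMap.neg_apply,
    ContinuousLinearMap.mulLeftRight_apply, ContinuousLinearMap.proj_apply,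
    Pi.single_apply, smul_eq_mul]
  split_ifs <;> field_simp <;> ring

/-- Let `n > 2` and let `U` be an open neighborhood of the unit simplex
`Δⁿ ⊂ ℝⁿ`. There is no `C¹` function `h : U → ℝ` such that
`D_j (x_j/x_i + h) = D_i (x_i/x_j + h)`, `D_j (x_ℓ/x_k + h) = D_k (x_i/x_j + h)`, and
`D_i (x_ℓ/x_k + h) = D_k (x_j/x_i + h)` hold on `U`, where `i ≠ j` and `k, ℓ ∉ {i, j}`.
(Here `D_a f x = fderiv ℝ f x (Pi.single a 1)`.) -/
theorem no_exact_h_for_two_cycle (n : ℕ) (hn : 2 < n) (i j k l : Fin n)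
    (hij : i ≠ j) (hki : k ≠ i) (hkj : k ≠ j) (hli : l ≠ i) (hlj : l ≠ j)
    (U : Set (Fin n → ℝ)) (hUopen : IsOpen U) (hU : stdSimplex ℝ (Fin n) ⊆ U) :
    ¬ ∃ h : (Fin n → ℝ) → ℝ, ContDiffOn ℝ 1 h U ∧
      (∀ x ∈ U,
        fderiv ℝ (fun y : Fin n → ℝ => y j / y i + h y) x (Pi.single j 1)
          = fderiv ℝ (fun y : Fin n → ℝ => y i / y j + h y) x (Pi.single i 1)) ∧
      (∀ x ∈ U,
        fderiv ℝ (fun y : Fin n → ℝ => y l / y k + h y) x (Pi.single j 1)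
          = fderiv ℝ (fun y : Fin n → ℝ => y i / y j + h y) x (Pi.single k 1)) ∧
      (∀ x ∈ U,
        fderiv ℝ (fun y : Fin n → ℝ => y l / y k + h y) x (Pi.single i 1)
          = fderiv ℝ (fun y : Fin n → ℝ => y j / y i + h y) x (Pi.single k 1)) := by
  rintro ⟨h, hC1, hc1, hc2, hc3⟩
  -- the point: x i = 1/2, all other coordinates 1/(2(n-1))
  set x : Fin n → ℝ := fun m => if m = i then 1/2 else 1/(2*(n-1)) with hxdef
  have hn1 : (0:ℝ) < (n:ℝ) - 1 := by
    have : (2:ℝ) < n := by exact_mod_cast hn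
    linarith
  have hpos : ∀ m, 0 < x m := by
    intro m
    by_cases hm : m = i
    · simp [hxdef, hm]
    · simp only [hxdef, if_neg hm]
      exact div_pos one_pos (by linarith)
  have hxS : x ∈ stdSimplex ℝ (Fin n) := by
    constructor
    · intro m; exact (hpos m).le
    · rw [← Finset.add_sum_erase _ x (Finset.mem_univ i)]
      have h2 : ∀ m ∈ Finset.univ.erase i, x m = 1/(2*((n:ℝ)-1)) := by
        intro m hm
        simp [hxdef, (Finset.mem_erase.mp hm).1]
      rw [Finset.sum_congr rfl h2, Finset.sum_const,
        Finset.card_erase_of_mem (Finset.mem_univ i), Finset.card_univ, Fintype.card_fin]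
      have hcard : ((n - 1 : ℕ) : ℝ) = (n:ℝ) - 1 := by
        have : 1 ≤ n := by omega
        push_cast [this]; ring
      simp only [hxdef, if_pos rfl, nsmul_eq_mul, hcard]
      field_simp
      ring
  have hxU : x ∈ U := hU hxS
  have hdiff : DifferentiableAt ℝ h x :=
    (hC1.contDiffAt (hUopen.mem_nhds hxU)).differentiableAt one_ne_zero
  have hi0 : x i ≠ 0 := (hpos i).ne'
  have hj0 : x j ≠ 0 := (hpos j).ne'
  have hk0 : x k ≠ 0 := (hpos k).ne'
  have e1 := hc1 x hxU
  have e2 := hc2 x hxU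
  have e3 := hc3 x hxU
  rw [quot_fderiv_single j i j x hi0 h hdiff, quot_fderiv_single i j i x hj0 h hdiff] at e1
  rw [quot_fderiv_single l k j x hk0 h hdiff, quot_fderiv_single i j k x hj0 h hdiff] at e2
  rw [quot_fderiv_single l k i x hk0 h hdiff, quot_fderiv_single j i k x hi0 h hdiff] at e3
  simp only [if_neg hlj, if_neg hkj, if_neg (Ne.symm hij), if_neg hki, if_neg hli,
    if_neg hij, if_neg (Ne.symm hkj), if_neg (Ne.symm hki), if_pos rfl, if_true,
    eq_self_iff_true, mul_zero, mul_one, sub_zero, zero_sub, zero_add, one_mul] at e1 e2 e3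
  -- e1 : 1/x i + D_j h = 1/x j + D_i h ; e2 : D_j h = D_k h ; e3 : D_i h = D_k h
  have hn2 : (2:ℝ) < n := by exact_mod_cast hn
  have hxij : x i ≠ x j := by
    simp only [hxdef, if_pos rfl, if_neg (Ne.symm hij)]
    intro hcon
    rw [div_eq_div_iff (by norm_num) (by linarith)] at hcon
    linarith
  have heq : 1 / x i = 1 / x j := by linarith
  rw [div_eq_div_iff hi0 hj0, one_mul, one_mul] at heq
  exact hxij heq.symm
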